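/- The deformed Newton sums p_s(x) = x₁^s + ... + xₙ^s + m^{(s-2)/2} x_{n+1}^s are quasi-invariant for the configuration A_n(m) with integer m ≥ 1: for each i = 1,...,n, p_s is invariant up to order 2m under the reflection swapping xᵢ and xⱼ, i.e., the odd normal derivatives ∂_α^{2r-1} p_s vanish on the hyperplane xᵢ = xⱼ for r = 1,...,m where α = eᵢ - eⱼ, and the first normal derivative of p_s vanishes on each hyperplane xᵢ = √m x_{n+1} (where α = eᵢ - √m e_{n+1}). -/
import Mathlib

open MvPolynomial

/-- Directional derivative `α·∇` on polynomials in `N` variables. -/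
noncomputable def dirDeriv {N : ℕ} (α : Fin N → ℝ) :
    Module.End ℝ (MvPolynomial (Fin N) ℝ) :=
  ∑ i, α i • (MvPolynomial.pderiv i).toLinearMap

/-- The deformed Newton sum `p_s = x₁^s + ... + xₙ^s + m^{(s-2)/2} x_{n+1}^s`. -/
noncomputable def deformedNewtonSum (n : ℕ) (m : ℕ) (s : ℕ) : MvPolynomial (Fin (n + 1)) ℝ :=
  (∑ i : Fin n, X i.castSucc ^ s) + C (Real.sqrt m ^ s / m) * X (Fin.last n) ^ s

lemma dirDeriv_X_pow {N : ℕ} (α : Fin N → ℝ) (k : Fin N) (t : ℕ) :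
    dirDeriv α (X k ^ t) = (α k * t) • (X k ^ (t - 1) : MvPolynomial (Fin N) ℝ) := by
  unfold dirDeriv
  rw [LinearMap.sum_apply]
  rw [Finset.sum_eq_single k]
  · rw [LinearMap.smul_apply, Derivation.coeFn_coe, pderiv_pow, pderiv_X_self, mul_one,
      ← nsmul_eq_mul, ← Nat.cast_smul_eq_nsmul ℝ, smul_smul]
  · intro b _ hb
    rw [LinearMap.smul_apply, Derivation.coeFn_coe, pderiv_pow,
      pderiv_X_of_ne (Ne.symm hb), mul_zero, smul_zero]
  · intro h
    exact absurd (Finset.mem_univ k) h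

lemma dirDeriv_pow_X_pow {N : ℕ} (α : Fin N → ℝ) (k : Fin N) (d t : ℕ) :
    (dirDeriv α ^ d) (X k ^ t) =
      (α k ^ d * (t.descFactorial d : ℝ)) • (X k ^ (t - d) : MvPolynomial (Fin N) ℝ) := by
  induction d with
  | zero => simp
  | succ d ih =>
      rw [pow_succ', Module.End.mul_apply, ih, map_smul, dirDeriv_X_pow, smul_smul,
        Nat.sub_sub, Nat.descFactorial_succ, Nat.cast_mul, pow_succ]
      ring_nf

theorem deformedNewtonSum_quasiInvariant (n m : ℕ) (hm : 1 ≤ m) (s : ℕ) (hs : 1 ≤ s) :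
    (∀ i j : Fin n, i ≠ j → ∀ r ∈ Finset.Icc 1 m, ∀ x : Fin (n + 1) → ℝ,
      x i.castSucc = x j.castSucc →
      MvPolynomial.eval x
        ((dirDeriv (fun k => if k = i.castSucc then 1 else if k = j.castSucc then -1 else 0)
            ^ (2 * r - 1)) (deformedNewtonSum n m s)) = 0) ∧
    (∀ i : Fin n, ∀ x : Fin (n + 1) → ℝ,
      x i.castSucc = Real.sqrt m * x (Fin.last n) →
      MvPolynomial.eval x
        ((dirDeriv (fun k => if k = i.castSucc then 1
            else if k = Fin.last n then -(Real.sqrt m) else 0))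
          (deformedNewtonSum n m s)) = 0) := by
  have hsplit : ∀ (α : Fin (n+1) → ℝ) (d : ℕ) (x : Fin (n+1) → ℝ),
      MvPolynomial.eval x ((dirDeriv α ^ d) (deformedNewtonSum n m s)) =
        (∑ k : Fin n, α k.castSucc ^ d * (s.descFactorial d : ℝ) * x k.castSucc ^ (s - d)) +
          (Real.sqrt m ^ s / m) *
            (α (Fin.last n) ^ d * (s.descFactorial d : ℝ) * x (Fin.last n) ^ (s - d)) := by
    intro α d x
    rw [deformedNewtonSum, map_add, map_sum, C_mul']
    rw [map_smul, map_add, map_sum]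
    simp only [dirDeriv_pow_X_pow]
    simp [smul_eq_C_mul, mul_assoc]
  constructor
  · intro i j hij r hr x hx
    have hr1 : 1 ≤ r := (Finset.mem_Icc.mp hr).1
    have hd1 : 1 ≤ 2 * r - 1 := by omega
    have hodd : Odd (2 * r - 1) := ⟨r - 1, by omega⟩
    rw [hsplit]
    have hlast : (if Fin.last n = i.castSucc then (1:ℝ)
        else if Fin.last n = j.castSucc then -1 else 0) = 0 := by
      rw [if_neg (Fin.castSucc_lt_last i).ne', if_neg (Fin.castSucc_lt_last j).ne']
    rw [hlast, zero_pow (show 2*r-1 ≠ 0 by omega), zero_mul, zero_mul, mul_zero, add_zero]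
    have hterm : ∀ k : Fin n,
        ((if k.castSucc = i.castSucc then (1:ℝ)
            else if k.castSucc = j.castSucc then -1 else 0) ^ (2*r-1)
          * (s.descFactorial (2*r-1) : ℝ) * x k.castSucc ^ (s - (2*r-1)))
        = (if k = i then (s.descFactorial (2*r-1) : ℝ) * x i.castSucc ^ (s - (2*r-1)) else 0)
          + (if k = j then -((s.descFactorial (2*r-1) : ℝ) * x i.castSucc ^ (s - (2*r-1)))
              else 0) := by
      intro k
      rcases eq_or_ne k i with rfl | hki
      · rw [if_pos rfl, if_pos rfl, if_neg hij]
        simp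
      · rw [if_neg (fun h => hki (Fin.castSucc_injective _ h)), if_neg hki]
        rcases eq_or_ne k j with rfl | hkj
        · rw [if_pos rfl, if_pos rfl, hodd.neg_one_pow, hx]
          ring
        · rw [if_neg (fun h => hkj (Fin.castSucc_injective _ h)), if_neg hkj,
            zero_pow (by omega)]
          ring
    rw [Finset.sum_congr rfl (fun k _ => hterm k), Finset.sum_add_distrib,
      Finset.sum_ite_eq' _ i, Finset.sum_ite_eq' _ j]
    simp
  · intro i x hx
    have h1 : (dirDeriv (fun k => if k = i.castSucc then 1
        else if k = Fin.last n then -(Real.sqrt m) else 0) : Module.End ℝ _) =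
        (dirDeriv _) ^ 1 := (pow_one _).symm
    rw [h1, hsplit]
    have hlast : (if Fin.last n = i.castSucc then (1:ℝ)
        else if Fin.last n = Fin.last n then -(Real.sqrt m) else 0) = -(Real.sqrt m) := by
      rw [if_neg (Fin.castSucc_lt_last i).ne', if_pos rfl]
    rw [hlast]
    have hterm : ∀ k : Fin n,
        ((if k.castSucc = i.castSucc then (1:ℝ)
            else if k.castSucc = Fin.last n then -(Real.sqrt m) else 0) ^ 1
          * (s.descFactorial 1 : ℝ) * x k.castSucc ^ (s - 1))
        = (if k = i then (s:ℝ) * x i.castSucc ^ (s-1) else 0) := by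
      intro k
      rcases eq_or_ne k i with rfl | hki
      · rw [if_pos rfl, if_pos rfl]
        simp
      · rw [if_neg (fun h => hki (Fin.castSucc_injective _ h)), if_neg hki,
          if_neg (Fin.castSucc_lt_last k).ne]
        ring
    rw [Finset.sum_congr rfl (fun k _ => hterm k), Finset.sum_ite_eq' _ i, if_pos (Finset.mem_univ i)]
    rw [hx]
    have hm0 : (0:ℝ) ≤ (m:ℝ) := by positivity
    have hsq : Real.sqrt m ^ 2 = (m:ℝ) := Real.sq_sqrt hm0
    have hmne : (m:ℝ) ≠ 0 := by
      have : (1:ℝ) ≤ m := by exact_mod_cast hm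
      linarith
    have key : Real.sqrt m ^ s * Real.sqrt m = (m:ℝ) * Real.sqrt m ^ (s-1) := by
      have h2 : s + 1 = (s-1) + 2 := by omega
      rw [← pow_succ, h2, pow_add, hsq]; ring
    have e1 : Real.sqrt m ^ s / m * Real.sqrt m = Real.sqrt m ^ (s - 1) := by
      rw [div_mul_eq_mul_div, key, mul_comm, mul_div_assoc, div_self hmne, mul_one]
    simp only [Nat.descFactorial_one, pow_one]
    rw [mul_pow]
    linear_combination (-(s:ℝ) * (x (Fin.last n))^(s-1)) * e1
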